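/- Let (A_v, B_v, C_v, D_v) be a stable unitary realization with state dimension n_v and input/output dimension m, and let (A_w, B_w, C_w, D_w) be a stable unitary realization with state dimension n_w and the same input/output dimension m. Let Ω = ∑_{k=0}^{∞} A_v^k B_v B_wᴴ (A_wᴴ)^k (the unique solution of the Stein equation Ω = A_v Ω A_wᴴ + B_v B_wᴴ), let C∘ = D_v B_wᴴ + C_v Ω A_wᴴ, and let Q = ∑_{k=0}^{∞} A_w^k C∘ᴴ C∘ (A_wᴴ)^k (the unique solution of the Stein equation Q = A_w Q A_wᴴ + C∘ᴴ C∘). Then Q is a positive contraction: both Q and I − Q are positive semidefinite. -/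

import Mathlib

open Matrix ComplexOrder Filter Topology

section Helpers

private lemma stein_of_hasSum {N P : ℕ} {A : Matrix (Fin N) (Fin N) ℂ}
    {B : Matrix (Fin P) (Fin P) ℂ} {X S : Matrix (Fin N) (Fin P) ℂ}
    (h : HasSum (fun k : ℕ => A ^ k * X * B ^ k) S) : S = A * S * B + X := by
  have h1 : HasSum (fun k : ℕ => A ^ (k + 1) * X * B ^ (k + 1))
      (S - A ^ 0 * X * B ^ 0) := by
    refine (hasSum_nat_add_iff (f := fun k : ℕ => A ^ k * X * B ^ k) 1).mpr ?_
    simpa using h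
  have hc : Continuous (fun M : Matrix (Fin N) (Fin P) ℂ => A * M * B) :=
    (continuous_const.matrix_mul continuous_id).matrix_mul continuous_const
  let g : Matrix (Fin N) (Fin P) ℂ →+ Matrix (Fin N) (Fin P) ℂ :=
    AddMonoidHom.mk' (fun M => A * M * B)
      (by intro x y; show A * (x + y) * B = A * x * B + A * y * B
          rw [Matrix.mul_add, Matrix.add_mul])
  have h2 : HasSum (fun k : ℕ => A * (A ^ k * X * B ^ k) * B) (A * S * B) :=
    h.map g hc
  have h3 : (fun k : ℕ => A * (A ^ k * X * B ^ k) * B)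
      = fun k : ℕ => A ^ (k + 1) * X * B ^ (k + 1) := by
    funext k
    rw [pow_succ', pow_succ]
    simp only [Matrix.mul_assoc]
  rw [h3] at h2
  have h4 := h2.unique h1
  simp only [pow_zero, Matrix.one_mul, Matrix.mul_one] at h4
  rw [h4]; abel

private lemma posSemidef_of_hasSum {N : ℕ} {f : ℕ → Matrix (Fin N) (Fin N) ℂ}
    {S : Matrix (Fin N) (Fin N) ℂ} (hf : ∀ k, (f k).PosSemidef) (h : HasSum f S) :
    S.PosSemidef := by
  refine Matrix.posSemidef_iff_dotProduct_mulVec.mpr ⟨?_, ?_⟩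
  · have h2 : HasSum (fun k => (f k)ᴴ) Sᴴ := h.matrix_conjTranspose
    have h3 : (fun k => (f k)ᴴ) = f := funext fun k => (hf k).1
    rw [h3] at h2
    exact h2.unique h
  · intro x
    have hc : Continuous fun M : Matrix (Fin N) (Fin N) ℂ => star x ⬝ᵥ M.mulVec x :=
      continuous_const.dotProduct (continuous_id.matrix_mulVec continuous_const)
    let g : Matrix (Fin N) (Fin N) ℂ →+ ℂ :=
      AddMonoidHom.mk' (fun M : Matrix (Fin N) (Fin N) ℂ => star x ⬝ᵥ M.mulVec x)
        (by intro M M'; simp [Matrix.add_mulVec, dotProduct_add])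
    have h2 : HasSum (fun k => star x ⬝ᵥ (f k).mulVec x) (star x ⬝ᵥ S.mulVec x) :=
      h.map g hc
    exact h2.nonneg fun k => (hf k).dotProduct_mulVec_nonneg x

attribute [local instance] Matrix.frobeniusSeminormedAddCommGroup
  Matrix.frobeniusNormedAddCommGroup Matrix.frobeniusNormedRing
  Matrix.frobeniusNormedAlgebra

private lemma norm_pow_tendsto_zero {N : ℕ} {A : Matrix (Fin N) (Fin N) ℂ}
    (hst : ∀ μ ∈ spectrum ℂ A, ‖μ‖ < 1) :
    Tendsto (fun n : ℕ => ‖A ^ n‖) atTop (𝓝 0) := by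
  have hρ : spectralRadius ℂ A < 1 := by
    rcases (spectrum ℂ A).eq_empty_or_nonempty with he | hne
    · rw [spectralRadius]
      simp [he]
    · refine spectrum.spectralRadius_lt_of_forall_lt_of_nonempty hne (r := 1) ?_
      intro k hk
      exact_mod_cast hst k hk
  have gel := spectrum.pow_nnnorm_pow_one_div_tendsto_nhds_spectralRadius A
  obtain ⟨r, hr1, hr2⟩ := exists_between hρ
  have hrtop : r ≠ ⊤ := (hr2.trans_le le_top).ne
  have hev : ∀ᶠ n : ℕ in atTop, (‖A ^ n‖₊ : ENNReal) ^ (1 / (n : ℝ)) < r :=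
    gel.eventually_lt_const hr1
  have key : ∀ᶠ n : ℕ in atTop, ‖A ^ n‖ ≤ r.toReal ^ n := by
    filter_upwards [hev, eventually_ge_atTop 1] with n hn hn1
    have hne : (n : ℝ) ≠ 0 := by positivity
    have h1 : ((‖A ^ n‖₊ : ENNReal) ^ (1 / (n : ℝ))) ^ (n : ℝ) ≤ r ^ (n : ℝ) :=
      ENNReal.rpow_le_rpow hn.le (by positivity)
    rw [← ENNReal.rpow_mul, one_div_mul_cancel hne, ENNReal.rpow_one,
      ENNReal.rpow_natCast] at h1
    have h2 : ((‖A ^ n‖₊ : ENNReal)).toReal ≤ (r ^ n).toReal :=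
      ENNReal.toReal_mono (by simp [hrtop]) h1
    simpa [ENNReal.toReal_pow] using h2
  have hrt : r.toReal < 1 := by
    rw [← ENNReal.toReal_one]
    exact ENNReal.toReal_strict_mono (by simp) hr2
  have tends : Tendsto (fun n : ℕ => r.toReal ^ n) atTop (𝓝 0) :=
    tendsto_pow_atTop_nhds_zero_of_lt_one ENNReal.toReal_nonneg hrt
  exact squeeze_zero' (Eventually.of_forall fun n => norm_nonneg _) key tends

private lemma eq_zero_of_stein_fixed {N : ℕ} {A : Matrix (Fin N) (Fin N) ℂ}
    (hst : ∀ μ ∈ spectrum ℂ A, ‖μ‖ < 1) {X : Matrix (Fin N) (Fin N) ℂ}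
    (hX : X = A * X * Aᴴ) : X = 0 := by
  have hiter : ∀ k : ℕ, X = A ^ k * X * Aᴴ ^ k := by
    intro k
    induction k with
    | zero => simp
    | succ k ih =>
      calc X = A * X * Aᴴ := hX
        _ = A * (A ^ k * X * Aᴴ ^ k) * Aᴴ := by rw [← ih]
        _ = A ^ (k + 1) * X * Aᴴ ^ (k + 1) := by
            rw [pow_succ', pow_succ]; simp only [mul_assoc]
  have hnorm0 := norm_pow_tendsto_zero hst
  have hb : ∀ n : ℕ, ‖X‖ ≤ ‖A ^ n‖ * ‖X‖ * ‖A ^ n‖ := by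
    intro n
    calc ‖X‖ = ‖A ^ n * X * Aᴴ ^ n‖ := by rw [← hiter n]
      _ ≤ ‖A ^ n * X‖ * ‖Aᴴ ^ n‖ := norm_mul_le _ _
      _ ≤ ‖A ^ n‖ * ‖X‖ * ‖Aᴴ ^ n‖ := by
          gcongr
          exact norm_mul_le _ _
      _ = ‖A ^ n‖ * ‖X‖ * ‖A ^ n‖ := by
          rw [← Matrix.conjTranspose_pow, Matrix.frobenius_norm_conjTranspose]
  have htends : Tendsto (fun n : ℕ => ‖A ^ n‖ * ‖X‖ * ‖A ^ n‖) atTop (𝓝 0) := by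
    have := (hnorm0.mul_const ‖X‖).mul hnorm0
    simpa using this
  have hle : ‖X‖ ≤ 0 := ge_of_tendsto htends (Eventually.of_forall hb)
  exact norm_le_zero_iff.mp hle

end Helpers

/-- Given stable unitary realizations of `V` and `W`, with `Ω` the solution of the
Stein equation `Ω = A_v Ω A_wᴴ + B_v B_wᴴ` (given as the sum of the series),
`C∘ = D_v B_wᴴ + C_v Ω A_wᴴ`, and `Q` the solution of `Q = A_w Q A_wᴴ + C∘ᴴ C∘`,
the matrix `Q` is a positive contraction. -/
theorem stmt_3 {nv nw m : ℕ}
    (Av : Matrix (Fin nv) (Fin nv) ℂ) (Bv : Matrix (Fin nv) (Fin m) ℂ)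
    (Cv : Matrix (Fin m) (Fin nv) ℂ) (Dv : Matrix (Fin m) (Fin m) ℂ)
    (Aw : Matrix (Fin nw) (Fin nw) ℂ) (Bw : Matrix (Fin nw) (Fin m) ℂ)
    (Cw : Matrix (Fin m) (Fin nw) ℂ) (Dw : Matrix (Fin m) (Fin m) ℂ)
    (hv_unitary : fromBlocks Av Bv Cv Dv ∈ Matrix.unitaryGroup (Fin nv ⊕ Fin m) ℂ)
    (hv_stable : ∀ μ ∈ spectrum ℂ Av, ‖μ‖ < 1)
    (hw_unitary : fromBlocks Aw Bw Cw Dw ∈ Matrix.unitaryGroup (Fin nw ⊕ Fin m) ℂ)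
    (hw_stable : ∀ μ ∈ spectrum ℂ Aw, ‖μ‖ < 1)
    (Ω : Matrix (Fin nv) (Fin nw) ℂ)
    (hΩ : HasSum (fun k : ℕ => Av ^ k * (Bv * Bwᴴ) * Awᴴ ^ k) Ω)
    (Co : Matrix (Fin m) (Fin nw) ℂ)
    (hCo : Co = Dv * Bwᴴ + Cv * Ω * Awᴴ)
    (Q : Matrix (Fin nw) (Fin nw) ℂ)
    (hQ : HasSum (fun k : ℕ => Aw ^ k * (Coᴴ * Co) * Awᴴ ^ k) Q) :
    Q.PosSemidef ∧ (1 - Q).PosSemidef := by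
  -- Stein equations from the series
  have hΩs : Ω = Av * Ω * Awᴴ + Bv * Bwᴴ := stein_of_hasSum hΩ
  have hQs : Q = Aw * Q * Awᴴ + Coᴴ * Co := stein_of_hasSum hQ
  -- unitarity identities
  have hvc : (fromBlocks Av Bv Cv Dv)ᴴ * fromBlocks Av Bv Cv Dv = 1 := by
    have := Matrix.mem_unitaryGroup_iff'.mp hv_unitary
    rwa [Matrix.star_eq_conjTranspose] at this
  have hwr : (fromBlocks Aw Bw Cw Dw) * (fromBlocks Aw Bw Cw Dw)ᴴ = 1 := by
    have := Matrix.mem_unitaryGroup_iff.mp hw_unitary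
    rwa [Matrix.star_eq_conjTranspose] at this
  have hAwAw : Aw * Awᴴ + Bw * Bwᴴ = 1 := by
    have h := congrArg Matrix.toBlocks₁₁ hwr
    simpa [fromBlocks_conjTranspose, fromBlocks_multiply, ← fromBlocks_one] using h
  -- the key identity via block multiplication
  set M : Matrix (Fin nv ⊕ Fin m) (Fin nv ⊕ Fin m) ℂ := fromBlocks Av Bv Cv Dv with hM
  set T : Matrix (Fin nv ⊕ Fin m) (Fin nw ⊕ Fin m) ℂ := fromBlocks (Ω * Awᴴ) 0 Bwᴴ 0 with hT
  have hMT : M * T = fromBlocks Ω 0 Co 0 := by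
    have e1 : Av * (Ω * Awᴴ) + Bv * Bwᴴ = Ω := by rw [← Matrix.mul_assoc, ← hΩs]
    have e2 : Cv * (Ω * Awᴴ) + Dv * Bwᴴ = Co := by
      rw [hCo, ← Matrix.mul_assoc]; exact add_comm _ _
    rw [hM, hT, fromBlocks_multiply, e1, e2]
    simp
  have hiso : (M * T)ᴴ * (M * T) = Tᴴ * T := by
    calc (M * T)ᴴ * (M * T) = Tᴴ * (Mᴴ * M) * T := by
          rw [conjTranspose_mul]; simp only [Matrix.mul_assoc]
      _ = Tᴴ * T := by rw [hM, hvc]; simp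
  have key : Ωᴴ * Ω + Coᴴ * Co = Aw * Ωᴴ * (Ω * Awᴴ) + Bw * Bwᴴ := by
    rw [hMT, hT] at hiso
    have h := congrArg Matrix.toBlocks₁₁ hiso
    simpa [fromBlocks_conjTranspose, fromBlocks_multiply, conjTranspose_mul,
      mul_assoc] using h
  -- 1 - ΩᴴΩ satisfies the same Stein equation as Q
  have k2 : Aw * (Ωᴴ * (Ω * Awᴴ)) = Ωᴴ * Ω + Coᴴ * Co - Bw * Bwᴴ := by
    rw [← Matrix.mul_assoc, key]; abel
  have hR : (1 : Matrix (Fin nw) (Fin nw) ℂ) - Ωᴴ * Ω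
      = Aw * (1 - Ωᴴ * Ω) * Awᴴ + Coᴴ * Co := by
    have expand : Aw * ((1 : Matrix (Fin nw) (Fin nw) ℂ) - Ωᴴ * Ω) * Awᴴ
        = Aw * Awᴴ - Aw * (Ωᴴ * (Ω * Awᴴ)) := by
      rw [Matrix.mul_sub, Matrix.mul_one, Matrix.sub_mul]
      simp only [Matrix.mul_assoc]
    rw [expand, k2, ← hAwAw]
    abel
  have a1 : Aw * Q * Awᴴ = Q - Coᴴ * Co := eq_sub_of_add_eq hQs.symm
  have a2 : Aw * ((1 : Matrix (Fin nw) (Fin nw) ℂ) - Ωᴴ * Ω) * Awᴴ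
      = (1 - Ωᴴ * Ω) - Coᴴ * Co := eq_sub_of_add_eq hR.symm
  have hXeq : Q - ((1 : Matrix (Fin nw) (Fin nw) ℂ) - Ωᴴ * Ω)
      = Aw * (Q - (1 - Ωᴴ * Ω)) * Awᴴ := by
    have expand : Aw * (Q - ((1 : Matrix (Fin nw) (Fin nw) ℂ) - Ωᴴ * Ω)) * Awᴴ
        = Aw * Q * Awᴴ - Aw * (1 - Ωᴴ * Ω) * Awᴴ := by
      rw [Matrix.mul_sub, Matrix.sub_mul]
    rw [expand, a1, a2]
    abel
  have hQeq : Q = 1 - Ωᴴ * Ω :=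
    sub_eq_zero.mp (eq_zero_of_stein_fixed hw_stable hXeq)
  constructor
  · refine posSemidef_of_hasSum (fun k => ?_) hQ
    have h := Matrix.posSemidef_conjTranspose_mul_self (Co * Awᴴ ^ k)
    have he : (Co * Awᴴ ^ k)ᴴ * (Co * Awᴴ ^ k) = Aw ^ k * (Coᴴ * Co) * Awᴴ ^ k := by
      rw [conjTranspose_mul, Matrix.conjTranspose_pow, Matrix.conjTranspose_conjTranspose]
      simp only [Matrix.mul_assoc]
    rwa [he] at h
  · rw [hQeq, sub_sub_cancel]
    exact Matrix.posSemidef_conjTranspose_mul_self Ω
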